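/- For 0 < α ≤ 2, the function d_{g,α}(p,q) := ‖p⁻¹·q‖_{g,α}, where ‖(x,y,z)‖_{g,α} = ((x²+y²)² + 4α²z²)^{1/4}, satisfies the triangle inequality and defines a left-invariant homogeneous distance on the Heisenberg group ℍ¹. -/

import Mathlib

open Real

abbrev H : Type := ℝ × ℝ × ℝ

noncomputable section

/-- Heisenberg group law on ℝ³. -/
def hmul (p q : H) : H :=
  (p.1 + q.1, p.2.1 + q.2.1, p.2.2 + q.2.2 + (p.1 * q.2.1 - p.2.1 * q.1) / 2)

/-- Heisenberg inverse. -/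
def hinv (p : H) : H := (-p.1, -p.2.1, -p.2.2)

/-- Heisenberg dilation. -/
def hdil (l : ℝ) (p : H) : H := (l * p.1, l * p.2.1, l ^ 2 * p.2.2)

/-- Horizontal norm ρ. -/
def rho (p : H) : ℝ := Real.sqrt (p.1 ^ 2 + p.2.1 ^ 2)

/-- The gauge norm ‖·‖_{g,α}. -/
def gnorm (α : ℝ) (p : H) : ℝ :=
  ((p.1 ^ 2 + p.2.1 ^ 2) ^ 2 + 4 * α ^ 2 * p.2.2 ^ 2) ^ ((1 : ℝ) / 4)

/-- The gauge distance d_{g,α}. -/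
def dg (α : ℝ) (p q : H) : ℝ := gnorm α (hmul (hinv p) q)

/-- Intermediate "squared" gauge. -/
def Mn (α : ℝ) (p : H) : ℝ :=
  Real.sqrt ((p.1 ^ 2 + p.2.1 ^ 2) ^ 2 + 4 * α ^ 2 * p.2.2 ^ 2)

lemma base_nonneg (α : ℝ) (p : H) :
    0 ≤ (p.1 ^ 2 + p.2.1 ^ 2) ^ 2 + 4 * α ^ 2 * p.2.2 ^ 2 := by positivity

lemma gnorm_eq_sqrt (α : ℝ) (p : H) : gnorm α p = Real.sqrt (Mn α p) := by
  unfold gnorm Mn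
  rw [Real.sqrt_eq_rpow, Real.sqrt_eq_rpow, ← Real.rpow_mul (base_nonneg α p)]
  norm_num

lemma Mn_nonneg (α : ℝ) (p : H) : 0 ≤ Mn α p := Real.sqrt_nonneg _

lemma gnorm_nonneg (α : ℝ) (p : H) : 0 ≤ gnorm α p := by
  rw [gnorm_eq_sqrt]; exact Real.sqrt_nonneg _

lemma gnorm_sq (α : ℝ) (p : H) : gnorm α p ^ 2 = Mn α p := by
  rw [gnorm_eq_sqrt, Real.sq_sqrt (Mn_nonneg α p)]

lemma Mn_eq_abs (α : ℝ) (p : H) :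
    Mn α p = ‖(⟨p.1 ^ 2 + p.2.1 ^ 2, 2 * α * p.2.2⟩ : ℂ)‖ := by
  rw [Complex.norm_def, Complex.normSq_mk]
  unfold Mn; ring_nf

lemma rho_le_gnorm (α : ℝ) (p : H) : rho p ≤ gnorm α p := by
  rw [gnorm_eq_sqrt]
  unfold rho
  apply Real.sqrt_le_sqrt
  have h : p.1 ^ 2 + p.2.1 ^ 2 = Real.sqrt ((p.1 ^ 2 + p.2.1 ^ 2) ^ 2) := by
    rw [Real.sqrt_sq (by positivity)]
  rw [h]
  exact Real.sqrt_le_sqrt (by nlinarith [sq_nonneg (α * p.2.2)])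

lemma rho_nonneg (p : H) : 0 ≤ rho p := Real.sqrt_nonneg _

/-- Subadditivity of the gauge norm (Korányi's argument). -/
lemma gnorm_subadd (α : ℝ) (hα : 0 < α) (hα2 : α ≤ 2) (p q : H) :
    gnorm α (hmul p q) ≤ gnorm α p + gnorm α q := by
  set x := p.1; set y := p.2.1; set t := p.2.2
  set u := q.1; set v := q.2.1; set s := q.2.2
  -- the complex numbers
  have key : Mn α (hmul p q) ≤ (gnorm α p + gnorm α q) ^ 2 := by
    have habs : Mn α (hmul p q)
        ≤ Mn α p + Mn α q + ‖(⟨2 * (x * u + y * v), α * (x * v - y * u)⟩ : ℂ)‖ := by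
      rw [Mn_eq_abs, Mn_eq_abs, Mn_eq_abs]
      have heq : (⟨(hmul p q).1 ^ 2 + (hmul p q).2.1 ^ 2, 2 * α * (hmul p q).2.2⟩ : ℂ)
          = (⟨x ^ 2 + y ^ 2, 2 * α * t⟩ : ℂ) + ⟨u ^ 2 + v ^ 2, 2 * α * s⟩
            + ⟨2 * (x * u + y * v), α * (x * v - y * u)⟩ := by
        apply Complex.ext <;> simp [hmul, Complex.add_re, Complex.add_im] <;> ring
      rw [heq]
      calc ‖(_ : ℂ)‖ ≤ ‖((⟨x ^ 2 + y ^ 2, 2 * α * t⟩ : ℂ)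
              + ⟨u ^ 2 + v ^ 2, 2 * α * s⟩)‖
            + ‖(⟨2 * (x * u + y * v), α * (x * v - y * u)⟩ : ℂ)‖ :=
          norm_add_le _ _
        _ ≤ _ := by
          gcongr
          exact norm_add_le _ _
    have hC : ‖(⟨2 * (x * u + y * v), α * (x * v - y * u)⟩ : ℂ)‖
        ≤ 2 * rho p * rho q := by
      rw [Complex.norm_def, Complex.normSq_mk]
      have h2 : 2 * rho p * rho q = Real.sqrt (4 * ((x ^ 2 + y ^ 2) * (u ^ 2 + v ^ 2))) := by
        rw [show (4 : ℝ) * ((x ^ 2 + y ^ 2) * (u ^ 2 + v ^ 2))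
            = 2 ^ 2 * (x ^ 2 + y ^ 2) * (u ^ 2 + v ^ 2) by ring,
          Real.sqrt_mul (by positivity), Real.sqrt_mul (by positivity),
          Real.sqrt_sq (by norm_num)]
        unfold rho; ring
      rw [h2]
      apply Real.sqrt_le_sqrt
      nlinarith [sq_nonneg (x * v - y * u), sq_nonneg α, hα.le,
        mul_le_mul_of_nonneg_right (mul_self_le_mul_self hα.le hα2) (sq_nonneg (x * v - y * u))]
    have h1 := rho_le_gnorm α p
    have h2 := rho_le_gnorm α q
    have h3 := gnorm_sq α p
    have h4 := gnorm_sq α q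
    have h5 := rho_nonneg p
    have h6 := rho_nonneg q
    have h7 := gnorm_nonneg α p
    have h8 := gnorm_nonneg α q
    nlinarith [mul_le_mul h1 h2 h6 h7]
  rw [gnorm_eq_sqrt]
  calc Real.sqrt (Mn α (hmul p q)) ≤ Real.sqrt ((gnorm α p + gnorm α q) ^ 2) :=
        Real.sqrt_le_sqrt key
    _ = gnorm α p + gnorm α q := Real.sqrt_sq (add_nonneg (gnorm_nonneg α p) (gnorm_nonneg α q))

lemma gnorm_eq_zero (α : ℝ) (hα : 0 < α) (p : H) : gnorm α p = 0 ↔ p = (0, 0, 0) := by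
  unfold gnorm
  rw [Real.rpow_eq_zero (base_nonneg α p) (by norm_num)]
  constructor
  · intro h
    have hA : (p.1 ^ 2 + p.2.1 ^ 2) ^ 2 = 0 :=
      le_antisymm (by nlinarith [mul_nonneg (sq_nonneg α) (sq_nonneg p.2.2)]) (sq_nonneg _)
    have hs : p.1 ^ 2 + p.2.1 ^ 2 = 0 := by
      have := sq_eq_zero_iff.mp hA; exact this
    have h1 : p.1 = 0 := sq_eq_zero_iff.mp
      (le_antisymm (by linarith [sq_nonneg p.2.1]) (sq_nonneg _))
    have h2 : p.2.1 = 0 := sq_eq_zero_iff.mp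
      (le_antisymm (by linarith [sq_nonneg p.1]) (sq_nonneg _))
    have hpos : (0 : ℝ) < 4 * α ^ 2 := by positivity
    have h3 : p.2.2 = 0 := by
      have h4 : 4 * α ^ 2 * p.2.2 ^ 2 = 0 := by linarith
      have ht2 : p.2.2 ^ 2 = 0 := le_antisymm (by nlinarith) (sq_nonneg _)
      exact sq_eq_zero_iff.mp ht2
    exact Prod.ext h1 (Prod.ext h2 h3)
  · rintro rfl; norm_num

theorem stmt2 (α : ℝ) (hα : 0 < α) (hα2 : α ≤ 2) :
    (∀ p q : H, dg α p q = 0 ↔ p = q) ∧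
    (∀ p q : H, dg α p q = dg α q p) ∧
    (∀ p q r : H, dg α p r ≤ dg α p q + dg α q r) ∧
    (∀ g p q : H, dg α (hmul g p) (hmul g q) = dg α p q) ∧
    (∀ l : ℝ, 0 < l → ∀ p q : H, dg α (hdil l p) (hdil l q) = l * dg α p q) := by
  refine ⟨?_, ?_, ?_, ?_, ?_⟩
  · -- definiteness
    intro p q
    rw [dg, gnorm_eq_zero α hα]
    constructor
    · intro h
      have e1 := congrArg Prod.fst h
      have e2 := congrArg (fun r : H => r.2.1) h
      have e3 := congrArg (fun r : H => r.2.2) h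
      simp only [hmul, hinv] at e1 e2 e3
      have f1 : q.1 = p.1 := by linarith
      have f2 : q.2.1 = p.2.1 := by linarith
      rw [f1, f2] at e3
      ring_nf at e3
      exact Prod.ext f1.symm (Prod.ext f2.symm (by linarith))
    · rintro rfl
      simp only [hmul, hinv, Prod.mk.injEq]
      refine ⟨by ring, by ring, by ring⟩
  · -- symmetry
    intro p q
    unfold dg gnorm hmul hinv
    ring_nf
  · -- triangle
    intro p q r
    have hs : hmul (hinv p) r = hmul (hmul (hinv p) q) (hmul (hinv q) r) := by
      unfold hmul hinv
      refine Prod.ext (by ring) (Prod.ext (by ring) (by ring))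
    rw [dg, hs]
    exact gnorm_subadd α hα hα2 _ _
  · -- left invariance
    intro g p q
    unfold dg
    congr 1
    unfold hmul hinv
    refine Prod.ext (by ring) (Prod.ext (by ring) (by ring))
  · -- homogeneity
    intro l hl p q
    have hs : hmul (hinv (hdil l p)) (hdil l q) = hdil l (hmul (hinv p) q) := by
      unfold hmul hinv hdil
      refine Prod.ext (by ring) (Prod.ext (by ring) (by ring))
    rw [dg, hs, dg]
    unfold gnorm hdil
    have hb : ((l * (hmul (hinv p) q).1) ^ 2 + (l * (hmul (hinv p) q).2.1) ^ 2) ^ 2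
        + 4 * α ^ 2 * (l ^ 2 * (hmul (hinv p) q).2.2) ^ 2
        = l ^ 4 * (((hmul (hinv p) q).1 ^ 2 + (hmul (hinv p) q).2.1 ^ 2) ^ 2
            + 4 * α ^ 2 * (hmul (hinv p) q).2.2 ^ 2) := by ring
    rw [hb, Real.mul_rpow (by positivity) (base_nonneg α _),
      ← Real.rpow_natCast l 4, ← Real.rpow_mul hl.le]
    norm_num

end
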